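/- Let G be a group generated by X ⊆ G, and suppose m ∈ ℕ is such that every element of G can be written as a product of at most m conjugates of elements of X ∪ X⁻¹. Then every element of G is a product of at most 2m palindromes with respect to X; that is, pw(G, X) ≤ 2m. -/

import Mathlib

/-- An element `g` of a group `G` is a palindrome with respect to `X ⊆ G` if `g` is the
product of some word over `X^{±1}` that equals its own reverse. -/
def IsPalindrome {G : Type*} [Group G] (X : Set G) (g : G) : Prop :=
  ∃ l : List G, (∀ t ∈ l, t ∈ X ∪ X⁻¹) ∧ l.reverse = l ∧ l.prod = g

private lemma inv_mem_symm {G : Type*} [Group G] {X : Set G} {t : G}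
    (ht : t ∈ X ∪ X⁻¹) : t⁻¹ ∈ X ∪ X⁻¹ := by
  rcases ht with h | h
  · exact Or.inr (by simpa using h)
  · exact Or.inl (by simpa using h)

private lemma conj_is_two_palindromes {G : Type*} [Group G]
    (X : Set G) (hX : Subgroup.closure X = ⊤) {x : G} (hx : x ∈ X ∪ X⁻¹) (c : G) :
    ∃ p₁ p₂ : G, IsPalindrome X p₁ ∧ IsPalindrome X p₂ ∧ p₁ * p₂ = c * x * c⁻¹ := by
  have hc : c ∈ Submonoid.closure (X ∪ X⁻¹) := by
    rw [← Subgroup.closure_toSubmonoid, hX]; trivial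
  obtain ⟨w, hw, hwp⟩ := Submonoid.exists_list_of_mem_closure hc
  have hw' : ∀ t ∈ w, t ∈ X ∪ X⁻¹ := hw
  set v : List G := w.map (fun t => t⁻¹) with hv
  refine ⟨(w ++ [x] ++ w.reverse).prod, (v ++ v.reverse).prod, ?_, ?_, ?_⟩
  · refine ⟨w ++ [x] ++ w.reverse, ?_, by simp, rfl⟩
    intro t ht
    simp only [List.mem_append, List.mem_reverse, List.mem_singleton] at ht
    rcases ht with (h | rfl) | h
    · exact hw' t h
    · exact hx
    · exact hw' t h
  · refine ⟨v ++ v.reverse, ?_, by simp, rfl⟩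
    intro t ht
    simp only [List.mem_append, List.mem_reverse] at ht
    have : t ∈ v := by tauto
    rw [hv, List.mem_map] at this
    obtain ⟨s, hs, rfl⟩ := this
    exact inv_mem_symm (hw' s hs)
  · have h1 : (w ++ [x] ++ w.reverse).prod = c * x * w.reverse.prod := by
      simp [List.prod_append, hwp, mul_assoc]
    have h2 : v.prod = w.reverse.prod⁻¹ := by
      rw [List.prod_inv_reverse]; simp [hv]
    have h3 : v.reverse.prod = c⁻¹ := by
      rw [← hwp, List.prod_inv_reverse, hv]
    rw [h1, List.prod_append, h2, h3]
    group

/-- If `G` is generated by `X` and every element of `G` is a product of at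
most `m` conjugates of elements of `X ∪ X⁻¹`, then every element of `G` is a product of
at most `2m` palindromes with respect to `X`, i.e. `pw(G, X) ≤ 2m`. -/
theorem palindromic_width_le_twice_conjugate_width {G : Type*} [Group G]
    (X : Set G) (hX : Subgroup.closure X = ⊤) (m : ℕ)
    (hconj : ∀ g : G, ∃ l : List G, l.length ≤ m ∧
      (∀ t ∈ l, ∃ x ∈ X ∪ X⁻¹, ∃ c : G, t = c * x * c⁻¹) ∧ l.prod = g) :
    ∀ g : G, ∃ ps : List G, ps.length ≤ 2 * m ∧
      (∀ p ∈ ps, IsPalindrome X p) ∧ ps.prod = g := by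
  intro g
  obtain ⟨l, hlen, hmem, hprod⟩ := hconj g
  suffices h : ∃ ps : List G, ps.length = 2 * l.length ∧
      (∀ p ∈ ps, IsPalindrome X p) ∧ ps.prod = l.prod by
    obtain ⟨ps, h1, h2, h3⟩ := h
    exact ⟨ps, by omega, h2, by rw [h3, hprod]⟩
  clear hlen hprod
  induction l with
  | nil => exact ⟨[], by simp, by simp, by simp⟩
  | cons t l ih =>
    obtain ⟨ps, h1, h2, h3⟩ := ih (fun s hs => hmem s (List.mem_cons_of_mem _ hs))
    obtain ⟨x, hx, c, rfl⟩ := hmem t List.mem_cons_self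
    obtain ⟨p₁, p₂, hp₁, hp₂, hpe⟩ := conj_is_two_palindromes X hX hx c
    refine ⟨p₁ :: p₂ :: ps, by simp [h1]; ring, ?_, ?_⟩
    · intro p hp
      rw [List.mem_cons, List.mem_cons] at hp
      rcases hp with rfl | rfl | hp
      · exact hp₁
      · exact hp₂
      · exact h2 p (by assumption)
    · simp [← mul_assoc, hpe, h3]
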